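/- Let k_0 ≥ 2 be an integer large enough that A := log(2k_0) − 2·log log(2k_0) > 0, and set T := (e^A − 1)/A and γ := (1/A)·(1 − 1/(1 + A·T)). Define F°(t_1, ..., t_{2k_0}) := 1_{Δ_{2k_0}(1)}(t_1, ..., t_{2k_0}) · ∏_{j=1}^{2k_0} 1_{[0,T]}(2k_0 t_j)/(1 + 2k_0 A t_j). Then ∫_{[0,∞)^{2k_0}} F°(t_1, ..., t_{2k_0})^2 dt_1 ··· dt_{2k_0} ≤ γ^{2k_0}/(2k_0)^{2k_0}. -/

import Mathlib

open MeasureTheory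

/-- The simplex `Δ_k(y) = {t ∈ [0,∞)^k : t 0 + ... + t (k-1) ≤ y}`. -/
def simplexSet (k : ℕ) (y : ℝ) : Set (Fin k → ℝ) :=
  {t | (∀ i, 0 ≤ t i) ∧ (∑ i, t i) ≤ y}

/-- `A k₀ = log (2k₀) - 2 log log (2k₀)`. -/
noncomputable def paperA (k0 : ℕ) : ℝ :=
  Real.log (2 * (k0 : ℝ)) - 2 * Real.log (Real.log (2 * (k0 : ℝ)))

/-- `T k₀ = (e^{A k₀} - 1)/A k₀`. -/
noncomputable def paperT (k0 : ℕ) : ℝ := (Real.exp (paperA k0) - 1) / paperA k0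

/-- `γ k₀ = (1/A)(1 - 1/(1 + A T))`. -/
noncomputable def paperGamma (k0 : ℕ) : ℝ :=
  (1 / paperA k0) * (1 - 1 / (1 + paperA k0 * paperT k0))

/-- `F°(t) = 1_{Δ_{2k₀}(1)}(t) ∏_j 1_{[0,T]}(2k₀ t_j)/(1 + 2k₀ A t_j)`. -/
noncomputable def Fcirc (k0 : ℕ) (t : Fin (2 * k0) → ℝ) : ℝ :=
  Set.indicator (simplexSet (2 * k0) 1) (fun _ => (1 : ℝ)) t *
    ∏ j, Set.indicator (Set.Icc (0 : ℝ) (paperT k0)) (fun _ => (1 : ℝ)) (2 * k0 * t j) /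
      (1 + 2 * k0 * paperA k0 * t j)

lemma oneDimInt (b c : ℝ) (hb : 0 < b) (hc : 0 ≤ c) :
    ∫ t : ℝ, (Set.Icc (0:ℝ) c).indicator (fun t => ((1 + b * t) ^ 2)⁻¹) t
      = (1 / b) * (1 - 1 / (1 + b * c)) := by
  have hne : ∀ t ∈ Set.uIcc (0:ℝ) c, (1 : ℝ) + b * t ≠ 0 := by
    intro t ht
    rw [Set.uIcc_of_le hc] at ht
    have : 0 ≤ b * t := mul_nonneg hb.le ht.1
    nlinarith
  have hderiv : ∀ t ∈ Set.uIcc (0:ℝ) c,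
      HasDerivAt (fun t => -(1 / b) * (1 + b * t)⁻¹) (((1 + b * t) ^ 2)⁻¹) t := by
    intro t ht
    have h1 : HasDerivAt (fun t : ℝ => 1 + b * t) b t := by
      simpa using ((hasDerivAt_id t).const_mul b).const_add 1
    have h2 : HasDerivAt (fun t => -(1 / b) * (1 + b * t)⁻¹) (-(1 / b) * (-b / (1 + b * t) ^ 2)) t :=
      (h1.inv (hne t ht)).const_mul (-(1 / b))
    convert h2 using 1
    field_simp
  have hcont : ContinuousOn (fun t : ℝ => ((1 + b * t) ^ 2)⁻¹) (Set.uIcc 0 c) := by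
    apply ContinuousOn.inv₀ (by fun_prop)
    intro t ht
    exact pow_ne_zero 2 (hne t ht)
  have hint : IntervalIntegrable (fun t : ℝ => ((1 + b * t) ^ 2)⁻¹) volume 0 c :=
    hcont.intervalIntegrable
  rw [integral_indicator measurableSet_Icc, integral_Icc_eq_integral_Ioc,
    ← intervalIntegral.integral_of_le hc,
    intervalIntegral.integral_eq_sub_of_hasDerivAt hderiv hint]
  have h0 : (1 : ℝ) + b * c ≠ 0 := hne c (by rw [Set.uIcc_of_le hc]; exact ⟨hc, le_refl c⟩)
  field_simp
  ring

/-- Maynard's upper bound: `∫ (F°)² ≤ γ^{2k₀}/(2k₀)^{2k₀}`. -/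
theorem Fcirc_sq_integral_le (k0 : ℕ) (hk0 : 2 ≤ k0) (hA : 0 < paperA k0) :
    (∫ t in {t : Fin (2 * k0) → ℝ | ∀ i, 0 ≤ t i}, (Fcirc k0 t) ^ 2) ≤
      paperGamma k0 ^ (2 * k0) / (2 * (k0 : ℝ)) ^ (2 * k0) := by
  have hk : (0:ℝ) < 2 * k0 := by
    have : (2:ℝ) ≤ (k0:ℝ) := by exact_mod_cast hk0
    linarith
  set A := paperA k0 with hAdef
  set T := paperT k0 with hTdef
  have hT0 : 0 ≤ T := by
    rw [hTdef, paperT]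
    apply div_nonneg _ hA.le
    have := Real.one_le_exp hA.le
    linarith
  set b : ℝ := 2 * k0 * A with hbdef
  have hb : 0 < b := mul_pos hk hA
  set c : ℝ := T / (2 * k0) with hcdef
  have hc : 0 ≤ c := div_nonneg hT0 hk.le
  set g : ℝ → ℝ := fun t => (Set.Icc (0:ℝ) c).indicator (fun t => ((1 + b * t) ^ 2)⁻¹) t
    with hgdef
  have hg_nonneg : ∀ s, 0 ≤ g s := fun s =>
    Set.indicator_nonneg (fun t _ => by positivity) s
  -- key pointwise identity
  have key : ∀ s : ℝ,
      ((Set.Icc (0:ℝ) T).indicator (fun _ => (1:ℝ)) (2 * k0 * s) / (1 + 2 * k0 * A * s)) ^ 2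
        = g s := by
    intro s
    have hmem : (2 * (k0:ℝ) * s ∈ Set.Icc (0:ℝ) T) ↔ s ∈ Set.Icc (0:ℝ) c := by
      constructor
      · rintro ⟨h1, h2⟩
        exact ⟨nonneg_of_mul_nonneg_right h1 hk, (le_div_iff₀' hk).mpr h2⟩
      · rintro ⟨h1, h2⟩
        exact ⟨mul_nonneg hk.le h1, (le_div_iff₀' hk).mp h2⟩
    by_cases hs : (2 * (k0:ℝ) * s) ∈ Set.Icc (0:ℝ) T
    · rw [hgdef]
      simp only [Set.indicator_of_mem hs, Set.indicator_of_mem (hmem.mp hs)]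
      rw [div_pow, one_pow, one_div]
    · rw [hgdef]
      simp only [Set.indicator_of_notMem hs, Set.indicator_of_notMem (fun h => hs (hmem.mpr h))]
      simp
  set S : Set (Fin (2 * k0) → ℝ) := {t | ∀ i, 0 ≤ t i} with hSdef
  have hS : MeasurableSet S := by
    have : S = ⋂ i, {t : Fin (2 * k0) → ℝ | 0 ≤ t i} := by
      ext t; simp [hSdef, Set.mem_iInter]
    rw [this]
    exact MeasurableSet.iInter fun i =>
      measurableSet_le measurable_const (measurable_pi_apply i)
  have hpt : ∀ t : Fin (2 * k0) → ℝ,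
      S.indicator (fun t => (Fcirc k0 t) ^ 2) t ≤ ∏ j, g (t j) := by
    intro t
    have hprod_nonneg : 0 ≤ ∏ j, g (t j) :=
      Finset.prod_nonneg fun j _ => hg_nonneg (t j)
    by_cases ht : t ∈ S
    · rw [Set.indicator_of_mem ht]
      have hsq : (Fcirc k0 t) ^ 2 ≤
          (∏ j, Set.indicator (Set.Icc (0 : ℝ) T) (fun _ => (1 : ℝ)) (2 * k0 * t j) /
            (1 + 2 * k0 * A * t j)) ^ 2 := by
        rw [Fcirc, mul_pow]
        have hind : (Set.indicator (simplexSet (2 * k0) 1) (fun _ => (1 : ℝ)) t) ^ 2 ≤ 1 := by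
          by_cases h : t ∈ simplexSet (2 * k0) 1 <;> simp [h]
        nlinarith [sq_nonneg (∏ j, Set.indicator (Set.Icc (0 : ℝ) T) (fun _ => (1 : ℝ))
          (2 * k0 * t j) / (1 + 2 * k0 * A * t j))]
      calc (Fcirc k0 t) ^ 2 ≤ _ := hsq
        _ = ∏ j, g (t j) := by
          rw [← Finset.prod_pow]
          exact Finset.prod_congr rfl fun j _ => key (t j)
    · rw [Set.indicator_of_notMem ht]
      exact hprod_nonneg
  have hg_int : Integrable g := by
    refine (ContinuousOn.integrableOn_Icc ?_).integrable_indicator measurableSet_Icc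
    apply ContinuousOn.inv₀ (by fun_prop)
    intro s hs
    have : 0 ≤ b * s := mul_nonneg hb.le hs.1
    positivity
  have hG_int : Integrable (fun t : Fin (2 * k0) → ℝ => ∏ j, g (t j)) :=
    Integrable.fintype_prod fun _ => hg_int
  have step1 : (∫ t in S, (Fcirc k0 t) ^ 2) ≤ ∫ t : Fin (2 * k0) → ℝ, ∏ j, g (t j) := by
    rw [← integral_indicator hS]
    apply integral_mono_of_nonneg _ hG_int (Filter.Eventually.of_forall hpt)
    exact Filter.Eventually.of_forall fun t => Set.indicator_nonneg (fun s _ => sq_nonneg _) t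
  have step2 : (∫ t : Fin (2 * k0) → ℝ, ∏ j, g (t j)) = (∫ s, g s) ^ (2 * k0) := by
    rw [volume_pi, integral_fintype_prod_eq_pow, Fintype.card_fin]
  have step3 : (∫ s, g s) = paperGamma k0 / (2 * k0) := by
    rw [hgdef, oneDimInt b c hb hc]
    have hbc : b * c = A * T := by
      rw [hbdef, hcdef]; field_simp
    rw [hbc, paperGamma, ← hAdef, ← hTdef, hbdef]
    have hA' : A ≠ 0 := hA.ne'
    have hk' : (2 : ℝ) * k0 ≠ 0 := hk.ne'
    field_simp
  calc (∫ t in S, (Fcirc k0 t) ^ 2) ≤ (∫ s, g s) ^ (2 * k0) := by rw [← step2]; exact step1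
    _ = paperGamma k0 ^ (2 * k0) / (2 * (k0 : ℝ)) ^ (2 * k0) := by rw [step3, div_pow]
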